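/- Let p be a prime and let v_i = (a_i, b_i) ∈ 𝔽_p² be nonzero vectors for i = 1, ..., 2p-1. Assume that the vectors v_{p+1}, ..., v_{2p-1} all lie in the same projective class (i.e., each is a nonzero scalar multiple of a common nonzero vector). Then the system a_1 x_1^{p-1} + ... + a_{2p-1} x_{2p-1}^{p-1} ≡ 0 (mod p), b_1 x_1^{p-1} + ... + b_{2p-1} x_{2p-1}^{p-1} ≡ 0 (mod p) has a solution with (x_1, ..., x_p) ≢ (0, ..., 0) (mod p). -/

import Mathlib

lemma subsums_aux {ι : Type*} [DecidableEq ι] (p : ℕ) (hp : p.Prime) (s : Finset ι) (c : ι → ZMod p)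
    (hc : ∀ i ∈ s, c i ≠ 0) :
    min p (s.card + 1) ≤ ((s.powerset).image fun T => ∑ i ∈ T, c i).card := by
  haveI : Fact p.Prime := ⟨hp⟩
  induction s using Finset.induction_on with
  | empty =>
      simp only [Finset.powerset_empty, Finset.image_singleton, Finset.card_singleton,
        Finset.card_empty]
      omega
  | @insert a s ha ih =>
      have hca : c a ≠ 0 := hc a (Finset.mem_insert_self a s)
      have ihA := ih (fun i hi => hc i (Finset.mem_insert_of_mem hi))
      set A : Finset (ZMod p) := (s.powerset).image fun T => ∑ i ∈ T, c i with hA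
      have himg : ((insert a s).powerset.image fun T => ∑ i ∈ T, c i)
          = A ∪ A.image (fun x => c a + x) := by
        rw [Finset.powerset_insert, Finset.image_union, Finset.image_image, hA,
          Finset.image_image]
        congr 1
        apply Finset.image_congr
        intro T hT
        simp only [Finset.mem_coe, Finset.mem_powerset] at hT
        have haT : a ∉ T := fun h => ha (hT h)
        simp [Finset.sum_insert haT]
      rw [himg]
      have h0A : (0 : ZMod p) ∈ A := by
        apply Finset.mem_image.2
        exact ⟨∅, by simp⟩
      by_cases hsub : A.image (fun x => c a + x) ⊆ A
      · -- closed under adding c a: A = univ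
        have hclosed : ∀ x ∈ A, c a + x ∈ A := by
          intro x hx
          exact hsub (Finset.mem_image_of_mem _ hx)
        have hm : ∀ (m : ℕ) (x : ZMod p), x ∈ A → x + m • c a ∈ A := by
          intro m
          induction m with
          | zero => simpa using fun x hx => hx
          | succ m ihm =>
              intro x hx
              have : x + (m + 1) • c a = c a + (x + m • c a) := by
                rw [succ_nsmul]; ring
              rw [this]
              exact hclosed _ (ihm x hx)
        have huniv : A = Finset.univ := by
          apply Finset.eq_univ_of_forall
          intro y
          have : y = 0 + ((y / c a).val) • c a := by
            rw [nsmul_eq_mul, ZMod.natCast_val, ZMod.cast_id, div_mul_cancel₀ _ hca, zero_add]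
          rw [this]
          exact hm _ 0 h0A
        have : (A ∪ A.image (fun x => c a + x)).card ≥ p := by
          calc p = A.card := by rw [huniv]; simp [ZMod.card]
          _ ≤ _ := Finset.card_le_card Finset.subset_union_left
        omega
      · -- strictly grows
        obtain ⟨y, hy, hyA⟩ := Finset.not_subset.1 hsub
        obtain ⟨x, hx, rfl⟩ := Finset.mem_image.1 hy
        have hgrow : A.card + 1 ≤ (A ∪ A.image (fun x => c a + x)).card := by
          have : insert (c a + x) A ⊆ A ∪ A.image (fun x => c a + x) := by
            intro z hz
            rcases Finset.mem_insert.1 hz with rfl | hz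
            · exact Finset.mem_union_right _ (Finset.mem_image_of_mem _ hx)
            · exact Finset.mem_union_left _ hz
          calc A.card + 1 = (insert (c a + x) A).card := (Finset.card_insert_of_notMem hyA).symm
          _ ≤ _ := Finset.card_le_card this
        rw [Finset.card_insert_of_notMem ha]
        omega

theorem stmt_2 (p : ℕ) (hp : p.Prime) (v : Fin (2 * p - 1) → ZMod p × ZMod p)
    (hv : ∀ i, v i ≠ 0)
    (hclass : ∃ w : ZMod p × ZMod p, w ≠ 0 ∧
      ∀ i : Fin (2 * p - 1), p ≤ (i : ℕ) → ∃ c : ZMod p, c ≠ 0 ∧ v i = c • w) :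
    ∃ x : Fin (2 * p - 1) → ZMod p,
      (∑ i, (v i).1 * x i ^ (p - 1)) = 0 ∧
      (∑ i, (v i).2 * x i ^ (p - 1)) = 0 ∧
      ∃ i : Fin (2 * p - 1), (i : ℕ) < p ∧ x i ≠ 0 := by
  haveI : Fact p.Prime := ⟨hp⟩
  obtain ⟨w, hw, hcl⟩ := hclass
  have hp2 : 2 ≤ p := hp.two_le
  -- the linear functional vanishing on the line through w
  set f : ZMod p × ZMod p → ZMod p := fun x => x.1 * w.2 - x.2 * w.1 with hf
  have hfadd : ∀ x y, f (x + y) = f x + f y := by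
    intro x y; simp only [hf, Prod.fst_add, Prod.snd_add]; ring
  have hf0 : ∀ x, f x = 0 → ∃ t : ZMod p, x = t • w := by
    intro x hx
    have hw' : w.1 ≠ 0 ∨ w.2 ≠ 0 := by
      by_contra h
      push_neg at h
      exact hw (Prod.ext h.1 h.2)
    simp only [hf] at hx
    rcases hw' with h1 | h2
    · refine ⟨x.1 / w.1, ?_⟩
      have : x.2 = x.1 / w.1 * w.2 := by
        field_simp
        linear_combination -hx
      exact Prod.ext (by rw [Prod.smul_fst, smul_eq_mul, div_mul_cancel₀ _ h1]) (by rw [this]; rfl)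
    · refine ⟨x.2 / w.2, ?_⟩
      have : x.1 = x.2 / w.2 * w.1 := by
        field_simp
        linear_combination hx
      exact Prod.ext (by rw [this]; rfl) (by rw [Prod.smul_snd, smul_eq_mul, div_mul_cancel₀ _ h2])
  -- partial sums and pigeonhole
  set S : ℕ → ZMod p × ZMod p :=
    fun m => ∑ i ∈ Finset.univ.filter (fun i : Fin (2 * p - 1) => (i : ℕ) < m), v i with hS
  have hcard : Fintype.card (ZMod p) < Fintype.card (Fin (p + 1)) := by
    simp [ZMod.card]
  obtain ⟨a, b, hab, heq⟩ := Fintype.exists_ne_map_eq_of_card_lt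
    (fun k : Fin (p + 1) => f (S (k : ℕ))) hcard
  wlog hlt : (a : ℕ) < (b : ℕ) generalizing a b
  · rcases Nat.lt_trichotomy (a : ℕ) (b : ℕ) with h | h | h
    · exact this a b hab heq h
    · exact absurd (Fin.ext h) hab
    · exact this b a hab.symm heq.symm h
  clear hab
  -- the middle chunk
  set Sfin : Finset (Fin (2 * p - 1)) :=
    Finset.univ.filter (fun i : Fin (2 * p - 1) => (a : ℕ) ≤ (i : ℕ) ∧ (i : ℕ) < (b : ℕ)) with hSfin
  have hsplit : S (b : ℕ) = S (a : ℕ) + ∑ i ∈ Sfin, v i := by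
    simp only [hS]
    rw [← Finset.sum_union]
    · congr 1
      ext i
      simp only [Finset.mem_filter, Finset.mem_union, Finset.mem_univ, true_and, hSfin]
      omega
    · rw [Finset.disjoint_left]
      intro i hi hi'
      simp only [Finset.mem_filter, hSfin] at hi hi'
      omega
  have hfD : f (∑ i ∈ Sfin, v i) = 0 := by
    have h1 : f (S (b : ℕ)) = f (S (a : ℕ)) + f (∑ i ∈ Sfin, v i) := by
      rw [hsplit]; exact hfadd _ _
    linear_combination -heq - h1
  obtain ⟨t, ht⟩ := hf0 _ hfD
  -- scalars for the tail indices
  set I : Finset (Fin (2 * p - 1)) := Finset.univ.filter (fun i : Fin (2 * p - 1) => p ≤ (i : ℕ)) with hI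
  set c : Fin (2 * p - 1) → ZMod p := fun i =>
    if h : p ≤ (i : ℕ) then (hcl i h).choose else 1 with hc
  have hc0 : ∀ i ∈ I, c i ≠ 0 := by
    intro i hi
    simp only [hI, Finset.mem_filter] at hi
    simp only [hc, dif_pos hi.2]
    exact (hcl i hi.2).choose_spec.1
  have hcv : ∀ i ∈ I, v i = c i • w := by
    intro i hi
    simp only [hI, Finset.mem_filter] at hi
    simp only [hc, dif_pos hi.2]
    exact (hcl i hi.2).choose_spec.2
  have hIcard : p - 1 ≤ I.card := by
    have hIeq : I = (Finset.Ico p (2 * p - 1)).attachFin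
        (fun m hm => (Finset.mem_Ico.1 hm).2) := by
      ext i
      simp only [hI, Finset.mem_filter, Finset.mem_univ, true_and, Finset.mem_attachFin,
        Finset.mem_Ico]
      exact ⟨fun h => ⟨h, i.isLt⟩, fun h => h.1⟩
    rw [hIeq, Finset.card_attachFin, Nat.card_Ico]
    omega
  -- subset sums cover everything
  have hcover : ∀ z : ZMod p, ∃ T ∈ I.powerset, ∑ i ∈ T, c i = z := by
    intro z
    have h1 := subsums_aux p hp I c hc0
    have h2 : (I.powerset.image fun T => ∑ i ∈ T, c i).card = p := by
      have hle : (I.powerset.image fun T => ∑ i ∈ T, c i).card ≤ p := by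
        simpa [ZMod.card] using Finset.card_le_univ (I.powerset.image fun T => ∑ i ∈ T, c i)
      omega
    have huniv : (I.powerset.image fun T => ∑ i ∈ T, c i) = Finset.univ := by
      apply Finset.eq_univ_of_card
      simpa [ZMod.card] using h2
    have : z ∈ I.powerset.image fun T => ∑ i ∈ T, c i := by
      rw [huniv]; exact Finset.mem_univ z
    obtain ⟨T, hT, hTz⟩ := Finset.mem_image.1 this
    exact ⟨T, hT, hTz⟩
  obtain ⟨T, hT, hTz⟩ := hcover (-t)
  rw [Finset.mem_powerset] at hT
  -- assemble
  set U : Finset (Fin (2 * p - 1)) := Sfin ∪ T with hU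
  have hdisj : Disjoint Sfin T := by
    rw [Finset.disjoint_left]
    intro i hi hi'
    have hi2 := hT hi'
    simp only [hSfin, hI, Finset.mem_filter] at hi hi2
    have hb : (b : ℕ) ≤ p := by omega
    omega
  have hsumU : ∑ i ∈ U, v i = 0 := by
    rw [hU, Finset.sum_union hdisj, ht]
    have : ∑ i ∈ T, v i = (∑ i ∈ T, c i) • w := by
      rw [Finset.sum_smul]
      exact Finset.sum_congr rfl (fun i hi => hcv i (hT hi))
    rw [this, hTz, ← add_smul, add_neg_cancel, zero_smul]
  have hpow : ∀ i : Fin (2 * p - 1), (if i ∈ U then (1:ZMod p) else 0) ^ (p-1) = if i ∈ U then 1 else 0 := by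
    intro i
    by_cases h : i ∈ U <;> simp [h, zero_pow (show p - 1 ≠ 0 by omega)]
  refine ⟨fun i => if i ∈ U then 1 else 0, ?_, ?_, ?_⟩
  · calc ∑ i, (v i).1 * (if i ∈ U then (1:ZMod p) else 0) ^ (p-1)
        = ∑ i ∈ U, (v i).1 := by
          simp only [hpow, mul_ite, mul_one, mul_zero]
          rw [Finset.sum_ite_mem, Finset.univ_inter]
      _ = (∑ i ∈ U, v i).1 := Prod.fst_sum.symm
      _ = 0 := by rw [hsumU]; rfl
  · calc ∑ i, (v i).2 * (if i ∈ U then (1:ZMod p) else 0) ^ (p-1)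
        = ∑ i ∈ U, (v i).2 := by
          simp only [hpow, mul_ite, mul_one, mul_zero]
          rw [Finset.sum_ite_mem, Finset.univ_inter]
      _ = (∑ i ∈ U, v i).2 := Prod.snd_sum.symm
      _ = 0 := by rw [hsumU]; rfl
  · -- the witness
    have hbp : (b : ℕ) ≤ p := by omega
    have han : (a : ℕ) < 2 * p - 1 := by omega
    refine ⟨⟨(a : ℕ), han⟩, by simp only [Fin.val_mk]; omega, ?_⟩
    have : (⟨(a : ℕ), han⟩ : Fin (2 * p - 1)) ∈ U := by
      apply Finset.mem_union_left
      simp only [hSfin, Finset.mem_filter, Finset.mem_univ, true_and]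
      omega
    simp [this]
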